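/- Let m ≥ 1 and α ∈ ℂ. Let f : ℝ × ℤ → ℂ be differentiable in the time variable; define g(t,n) = ∏_{s=1}^{m−1} f(t,n+s) − α and G(t,n) = ∏_{s=0}^{m} f(t,n+s) − α, and assume G(t,n) ≠ 0 for all t, n. Suppose f satisfies ∂_t f(t,n) = f(t,n)·(∏_{s=1}^{m−1} g(t,n−s))/(∏_{s=0}^{m} G(t,n−s))·(g(t,n)·g(t,n−m)·(G(t,n) − G(t,n−m)) − G(t,n)·G(t,n−m)·(g(t,n) − g(t,n−m))) for all t, n. Then the function u(t,n) := g(t,n)·f(t,n)/G(t,n) satisfies ∂_t u(t,n) = u(t,n)²·(∏_{s=1}^{m} u(t,n+s) − ∏_{s=1}^{m} u(t,n−s)) − u(t,n)·(∏_{s=1}^{m−1} u(t,n+s) − ∏_{s=1}^{m−1} u(t,n−s)) for all t, n. -/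

import Mathlib

lemma mprod_reflect (v : ℤ → ℂ) (k : ℤ) (L : ℕ) :
    (∏ s ∈ Finset.range L, v (k - s - 1)) = ∏ s ∈ Finset.range L, v (k - L + s) := by
  rw [← Finset.prod_range_reflect (fun j => v (k - L + j)) L]
  apply Finset.prod_congr rfl
  intro s hs
  have hsL : s < L := Finset.mem_range.mp hs
  congr 1
  omega

lemma mprod_reflect' (v : ℤ → ℂ) (k : ℤ) (L : ℕ) :
    (∏ s ∈ Finset.range L, v (k - s)) = ∏ s ∈ Finset.range L, v (k - L + 1 + s) := by
  rw [← Finset.prod_range_reflect (fun j => v (k - L + 1 + j)) L]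
  apply Finset.prod_congr rfl
  intro s hs
  have hsL : s < L := Finset.mem_range.mp hs
  congr 1
  omega

lemma mprod_split (v : ℤ → ℂ) (k : ℤ) (L1 L2 : ℕ) :
    (∏ s ∈ Finset.range (L1 + L2), v (k + s)) =
      (∏ s ∈ Finset.range L1, v (k + s)) * ∏ s ∈ Finset.range L2, v (k + L1 + s) := by
  rw [Finset.prod_range_add]
  congr 1
  apply Finset.prod_congr rfl
  intro s _
  congr 1
  push_cast
  ring

lemma mprod_peel_left (v : ℤ → ℂ) (k : ℤ) (L : ℕ) :
    (∏ s ∈ Finset.range (L + 1), v (k + s)) = v k * ∏ s ∈ Finset.range L, v (k + 1 + s) := by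
  rw [Finset.prod_range_succ', mul_comm]
  congr 1
  · norm_num
  · apply Finset.prod_congr rfl
    intro s _
    congr 1
    push_cast
    ring

lemma mprod_peel_right (v : ℤ → ℂ) (k : ℤ) (L : ℕ) :
    (∏ s ∈ Finset.range (L + 1), v (k + s)) = (∏ s ∈ Finset.range L, v (k + s)) * v (k + L) :=
  Finset.prod_range_succ _ _

lemma pi_split1 (M : ℕ) (α : ℂ) (F g G : ℤ → ℂ)
    (hg : ∀ n : ℤ, g n = (∏ s ∈ Finset.range M, F (n + s + 1)) - α)
    (hG : ∀ n : ℤ, G n = (∏ s ∈ Finset.range (M + 1 + 1), F (n + s)) - α)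
    (j : ℤ) :
    (∏ s ∈ Finset.range (2 * M + 2), F (j + s)) = (G j + α) * (g (j + M + 1) + α) := by
  rw [show 2 * M + 2 = (M + 1 + 1) + M by ring, mprod_split]
  congr 1
  · rw [hG j]; ring
  · rw [hg (j + M + 1)]
    rw [sub_add_cancel]
    apply Finset.prod_congr rfl
    intro s _
    congr 1
    push_cast
    ring

lemma pi_split2 (M : ℕ) (α : ℂ) (F g G : ℤ → ℂ)
    (hg : ∀ n : ℤ, g n = (∏ s ∈ Finset.range M, F (n + s + 1)) - α)
    (hG : ∀ n : ℤ, G n = (∏ s ∈ Finset.range (M + 1 + 1), F (n + s)) - α)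
    (j : ℤ) :
    (∏ s ∈ Finset.range (2 * M + 2), F (j + s)) = (g (j - 1) + α) * (G (j + M) + α) := by
  rw [show 2 * M + 2 = M + (M + 1 + 1) by ring, mprod_split]
  congr 1
  · rw [hg (j - 1)]
    rw [sub_add_cancel]
    apply Finset.prod_congr rfl
    intro s _
    congr 1
    ring
  · rw [hG (j + M)]; ring



lemma step_lemma (M : ℕ) (α : ℂ) (F g G : ℤ → ℂ)
    (hg : ∀ n : ℤ, g n = (∏ s ∈ Finset.range M, F (n + s + 1)) - α)
    (hG : ∀ n : ℤ, G n = (∏ s ∈ Finset.range (M + 1 + 1), F (n + s)) - α)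
    (hG0 : ∀ n : ℤ, G n ≠ 0) (k : ℤ) :
    α * ((∏ s ∈ Finset.range M, g (k - s - 1)) / (∏ s ∈ Finset.range (M + 1 + 1), G (k - s)) *
        (g k * g (k - M - 1) * (G k - G (k - M - 1)) -
          G k * G (k - M - 1) * (g k - g (k - M - 1))))
      = (∏ s ∈ Finset.range (M + 1), g (k - M - 1 + s)) *
            ((∏ s ∈ Finset.range (2 * M + 2), F (k - M - 1 + s)) - α ^ 2) /
            (∏ s ∈ Finset.range (M + 1), G (k - M - 1 + s)) -
        (∏ s ∈ Finset.range (M + 1), g (k - M + s)) *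
            ((∏ s ∈ Finset.range (2 * M + 2), F (k - M + s)) - α ^ 2) /
            (∏ s ∈ Finset.range (M + 1), G (k - M + s)) := by
  rw [pi_split1 M α F g G hg hG (k - M - 1), pi_split2 M α F g G hg hG (k - M),
    show k - (M:ℤ) - 1 + M + 1 = k by ring]
  rw [mprod_reflect g k M]
  rw [mprod_reflect' G k (M + 1 + 1),
    show k - ((M + 1 + 1 : ℕ) : ℤ) + 1 = k - M - 1 by push_cast; ring,
    mprod_peel_left G (k - M - 1) (M + 1),
    show k - (M:ℤ) - 1 + 1 = k - M by ring]
  rw [mprod_peel_left g (k - M - 1) M, mprod_peel_left G (k - M - 1) M,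
    show k - (M:ℤ) - 1 + 1 = k - M by ring]
  rw [mprod_peel_right g (k - M) M, mprod_peel_right G (k - M) M,
    show k - (M:ℤ) + M = k by ring]
  have hc : (∏ s ∈ Finset.range M, G (k - M + s)) ≠ 0 :=
    Finset.prod_ne_zero_iff.mpr fun _ _ => hG0 _
  have h1 : G (k - M - 1) ≠ 0 := hG0 _
  have h2 : G k ≠ 0 := hG0 _
  field_simp
  ring

noncomputable def SvD (M : ℕ) (g G : ℤ → ℂ) (k : ℤ) : ℂ :=
  (∏ s ∈ Finset.range M, g (k - s - 1)) / (∏ s ∈ Finset.range (M + 1 + 1), G (k - s)) *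
    (g k * g (k - M - 1) * (G k - G (k - M - 1)) -
      G k * G (k - M - 1) * (g k - g (k - M - 1)))

noncomputable def PhiD (M : ℕ) (α : ℂ) (F g G : ℤ → ℂ) (j : ℤ) : ℂ :=
  (∏ s ∈ Finset.range (M + 1), g (j + s)) *
    ((∏ s ∈ Finset.range (2 * M + 2), F (j + s)) - α ^ 2) /
    (∏ s ∈ Finset.range (M + 1), G (j + s))

lemma stepD (M : ℕ) (α : ℂ) (F g G : ℤ → ℂ)
    (hg : ∀ n : ℤ, g n = (∏ s ∈ Finset.range M, F (n + s + 1)) - α)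
    (hG : ∀ n : ℤ, G n = (∏ s ∈ Finset.range (M + 1 + 1), F (n + s)) - α)
    (hG0 : ∀ n : ℤ, G n ≠ 0) (k : ℤ) :
    α * SvD M g G k = PhiD M α F g G (k - M - 1) - PhiD M α F g G (k - M) := by
  unfold SvD PhiD
  exact step_lemma M α F g G hg hG hG0 k

lemma telD (M : ℕ) (α : ℂ) (F g G : ℤ → ℂ)
    (hg : ∀ n : ℤ, g n = (∏ s ∈ Finset.range M, F (n + s + 1)) - α)
    (hG : ∀ n : ℤ, G n = (∏ s ∈ Finset.range (M + 1 + 1), F (n + s)) - α)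
    (hG0 : ∀ n : ℤ, G n ≠ 0) (n : ℤ) :
    α * ∑ s ∈ Finset.range M, SvD M g G (n + s + 1)
      = PhiD M α F g G (n - M) - PhiD M α F g G n := by
  have h := Finset.sum_range_sub' (fun i => PhiD M α F g G (n - (M : ℤ) + i)) M
  calc α * ∑ s ∈ Finset.range M, SvD M g G (n + s + 1)
      = ∑ s ∈ Finset.range M,
          ((fun i : ℕ => PhiD M α F g G (n - (M : ℤ) + i)) s
            - (fun i : ℕ => PhiD M α F g G (n - (M : ℤ) + i)) (s + 1)) := by
        rw [Finset.mul_sum]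
        refine Finset.sum_congr rfl fun s _ => ?_
        show α * SvD M g G (n + s + 1)
            = PhiD M α F g G (n - (M:ℤ) + s) - PhiD M α F g G (n - (M:ℤ) + ((s:ℕ) + 1 : ℕ))
        rw [stepD M α F g G hg hG hG0 (n + s + 1),
          show n + (s:ℤ) + 1 - M - 1 = n - M + s by ring,
          show n + (s:ℤ) + 1 - M = n - M + (((s:ℕ) + 1 : ℕ) : ℤ) by push_cast; ring]
    _ = PhiD M α F g G (n - M) - PhiD M α F g G n := by
        rw [h]
        show PhiD M α F g G (n - (M:ℤ) + ((0:ℕ):ℤ)) - PhiD M α F g G (n - (M:ℤ) + ((M:ℕ):ℤ)) = _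
        rw [show n - (M:ℤ) + ((0:ℕ):ℤ) = n - M by norm_num,
          show n - (M:ℤ) + ((M:ℕ):ℤ) = n by ring]

lemma sumsplit (M : ℕ) (v : ℤ → ℂ) (n : ℤ) :
    ∑ s ∈ Finset.range (M + 1 + 1), v (n + s)
      = v n + (∑ s ∈ Finset.range M, v (n + s + 1)) + v (n + M + 1) := by
  rw [Finset.sum_range_succ, Finset.sum_range_succ']
  rw [show ((M + 1 : ℕ) : ℤ) = (M : ℤ) + 1 by push_cast; ring]
  have h1 : ∀ s ∈ Finset.range M, v (n + ((s : ℕ) + 1 : ℕ)) = v (n + s + 1) := by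
    intro s _
    congr 1
    push_cast
    ring
  rw [Finset.sum_congr rfl h1]
  rw [show n + ((0:ℕ):ℤ) = n by norm_num, show n + ((M:ℤ) + 1) = n + M + 1 by ring]
  ring


lemma scalar_key (a b c d gm g0 gp Gm G0 Gp F0 PFp PFm α : ℂ)
    (hc : c ≠ 0) (hd : d ≠ 0) (hGm : Gm ≠ 0) (hG0 : G0 ≠ 0) (hGp : Gp ≠ 0)
    (hrelp : F0 * PFp = G0 + α) (hrelm : PFm * F0 = Gm + α) :
    F0 * ((G0 - g0) * (a * g0 * ((gm + α) * (G0 + α) - α ^ 2) / (c * G0) -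
            g0 * b * ((G0 + α) * (gp + α) - α ^ 2) / (G0 * d)) -
          α * (g0 * (a / (Gm * (c * G0)) * (g0 * gm * (G0 - Gm) - G0 * Gm * (g0 - gm)))) -
          g0 * (G0 + α) * (b / (G0 * (d * Gp)) * (gp * g0 * (Gp - G0) - Gp * G0 * (gp - g0)))) / G0 ^ 2
    = (g0 * F0 / G0) ^ 2 * (b * gp * PFp / (d * Gp) - gm * a * PFm / (Gm * c))
      - g0 * F0 / G0 * (b * (g0 + α) / d - a * (gm + α) / c) := by
  field_simp [hc, hd, hGm, hG0, hGp]
  linear_combination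
    (-(F0 * G0 * g0 ^ 2 * c * b * gp * Gm)) * hrelp +
    (F0 * G0 * g0 ^ 2 * a * gm * d * Gp) * hrelm

lemma final_algebra (M : ℕ) (α : ℂ) (F g G : ℤ → ℂ)
    (hg : ∀ n : ℤ, g n = (∏ s ∈ Finset.range M, F (n + s + 1)) - α)
    (hG : ∀ n : ℤ, G n = (∏ s ∈ Finset.range (M + 1 + 1), F (n + s)) - α)
    (hG0 : ∀ n : ℤ, G n ≠ 0) (n : ℤ) :
    (((g n + α) * (∑ s ∈ Finset.range M, SvD M g G (n + s + 1)) * F n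
        + g n * (F n * SvD M g G n)) * G n
      - g n * F n * ((G n + α) * ∑ s ∈ Finset.range (M + 1 + 1), SvD M g G (n + s))) / G n ^ 2
    = (g n * F n / G n) ^ 2 *
        ((∏ s ∈ Finset.range (M + 1), (g (n + s + 1) * F (n + s + 1) / G (n + s + 1))) -
          ∏ s ∈ Finset.range (M + 1), (g (n - s - 1) * F (n - s - 1) / G (n - s - 1)))
      - (g n * F n / G n) *
        ((∏ s ∈ Finset.range M, (g (n + s + 1) * F (n + s + 1) / G (n + s + 1))) -
          ∏ s ∈ Finset.range M, (g (n - s - 1) * F (n - s - 1) / G (n - s - 1))) := by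
  have hPhi1 : PhiD M α F g G (n - M)
      = (∏ s ∈ Finset.range M, g (n - M + s)) * g n *
          ((g (n - M - 1) + α) * (G n + α) - α ^ 2) /
          ((∏ s ∈ Finset.range M, G (n - M + s)) * G n) := by
    unfold PhiD
    rw [pi_split2 M α F g G hg hG (n - M),
      show n - (M:ℤ) - 1 = n - M - 1 by ring,
      mprod_peel_right g (n - M) M, mprod_peel_right G (n - M) M,
      show n - (M:ℤ) + M = n by ring]
  have hPhi0 : PhiD M α F g G n
      = g n * (∏ s ∈ Finset.range M, g (n + 1 + s)) *
          ((G n + α) * (g (n + M + 1) + α) - α ^ 2) /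
          (G n * (∏ s ∈ Finset.range M, G (n + 1 + s))) := by
    unfold PhiD
    rw [pi_split1 M α F g G hg hG n,
      mprod_peel_left g n M, mprod_peel_left G n M]
  have hSvn : SvD M g G n
      = (∏ s ∈ Finset.range M, g (n - M + s)) /
          (G (n - M - 1) * ((∏ s ∈ Finset.range M, G (n - M + s)) * G n)) *
          (g n * g (n - M - 1) * (G n - G (n - M - 1)) -
            G n * G (n - M - 1) * (g n - g (n - M - 1))) := by
    unfold SvD
    rw [mprod_reflect g n M, mprod_reflect' G n (M + 1 + 1),
      show n - ((M + 1 + 1 : ℕ) : ℤ) + 1 = n - M - 1 by push_cast; ring,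
      mprod_peel_left G (n - M - 1) (M + 1),
      show n - (M:ℤ) - 1 + 1 = n - M by ring,
      mprod_peel_right G (n - M) M,
      show n - (M:ℤ) + M = n by ring]
  have hSvp : SvD M g G (n + M + 1)
      = (∏ s ∈ Finset.range M, g (n + 1 + s)) /
          (G n * ((∏ s ∈ Finset.range M, G (n + 1 + s)) * G (n + M + 1))) *
          (g (n + M + 1) * g n * (G (n + M + 1) - G n) -
            G (n + M + 1) * G n * (g (n + M + 1) - g n)) := by
    unfold SvD
    rw [show n + (M:ℤ) + 1 - M - 1 = n by ring,
      mprod_reflect g (n + M + 1) M,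
      show n + (M:ℤ) + 1 - M = n + 1 by ring,
      mprod_reflect' G (n + M + 1) (M + 1 + 1),
      show n + (M:ℤ) + 1 - ((M + 1 + 1 : ℕ) : ℤ) + 1 = n by push_cast; ring,
      mprod_peel_left G n (M + 1),
      mprod_peel_right G (n + 1) M,
      show n + 1 + (M:ℤ) = n + M + 1 by ring]
  have hgb : (∏ s ∈ Finset.range (M + 1), g (n + s + 1))
      = (∏ s ∈ Finset.range M, g (n + 1 + s)) * g (n + M + 1) := by
    rw [show (∏ s ∈ Finset.range (M + 1), g (n + s + 1))
        = ∏ s ∈ Finset.range (M + 1), g (n + 1 + s) from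
      Finset.prod_congr rfl fun s _ => by congr 1; ring]
    rw [mprod_peel_right g (n + 1) M, show n + 1 + (M:ℤ) = n + M + 1 by ring]
  have hGb : (∏ s ∈ Finset.range (M + 1), G (n + s + 1))
      = (∏ s ∈ Finset.range M, G (n + 1 + s)) * G (n + M + 1) := by
    rw [show (∏ s ∈ Finset.range (M + 1), G (n + s + 1))
        = ∏ s ∈ Finset.range (M + 1), G (n + 1 + s) from
      Finset.prod_congr rfl fun s _ => by congr 1; ring]
    rw [mprod_peel_right G (n + 1) M, show n + 1 + (M:ℤ) = n + M + 1 by ring]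
  have hP1 : (∏ s ∈ Finset.range (M + 1), (g (n + s + 1) * F (n + s + 1) / G (n + s + 1)))
      = ((∏ s ∈ Finset.range M, g (n + 1 + s)) * g (n + M + 1)) *
          (∏ s ∈ Finset.range (M + 1), F (n + s + 1)) /
          ((∏ s ∈ Finset.range M, G (n + 1 + s)) * G (n + M + 1)) := by
    rw [Finset.prod_div_distrib, Finset.prod_mul_distrib, hgb, hGb]
  have hP2 : (∏ s ∈ Finset.range (M + 1), (g (n - s - 1) * F (n - s - 1) / G (n - s - 1)))
      = (g (n - M - 1) * (∏ s ∈ Finset.range M, g (n - M + s))) *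
          (∏ s ∈ Finset.range (M + 1), F (n - M - 1 + s)) /
          (G (n - M - 1) * (∏ s ∈ Finset.range M, G (n - M + s))) := by
    rw [Finset.prod_div_distrib, Finset.prod_mul_distrib,
      mprod_reflect g n (M + 1), mprod_reflect F n (M + 1), mprod_reflect G n (M + 1),
      show n - ((M + 1 : ℕ) : ℤ) = n - M - 1 by push_cast; ring,
      mprod_peel_left g (n - M - 1) M, mprod_peel_left G (n - M - 1) M,
      show n - (M:ℤ) - 1 + 1 = n - M by ring]
  have hP3 : (∏ s ∈ Finset.range M, (g (n + s + 1) * F (n + s + 1) / G (n + s + 1)))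
      = (∏ s ∈ Finset.range M, g (n + 1 + s)) * (g n + α) /
          (∏ s ∈ Finset.range M, G (n + 1 + s)) := by
    rw [Finset.prod_div_distrib, Finset.prod_mul_distrib,
      show (∏ s ∈ Finset.range M, g (n + s + 1))
        = ∏ s ∈ Finset.range M, g (n + 1 + s) from
        Finset.prod_congr rfl fun s _ => by congr 1; ring,
      show (∏ s ∈ Finset.range M, G (n + s + 1))
        = ∏ s ∈ Finset.range M, G (n + 1 + s) from
        Finset.prod_congr rfl fun s _ => by congr 1; ring,
      show (∏ s ∈ Finset.range M, F (n + s + 1)) = g n + α from by rw [hg n]; ring]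
  have hP4 : (∏ s ∈ Finset.range M, (g (n - s - 1) * F (n - s - 1) / G (n - s - 1)))
      = (∏ s ∈ Finset.range M, g (n - M + s)) * (g (n - M - 1) + α) /
          (∏ s ∈ Finset.range M, G (n - M + s)) := by
    rw [Finset.prod_div_distrib, Finset.prod_mul_distrib,
      mprod_reflect g n M, mprod_reflect F n M, mprod_reflect G n M,
      show (∏ s ∈ Finset.range M, F (n - M + s)) = g (n - M - 1) + α from by
        rw [hg (n - M - 1), sub_add_cancel]
        exact Finset.prod_congr rfl fun s _ => by congr 1; ring]
  have hrelp : F n * (∏ s ∈ Finset.range (M + 1), F (n + s + 1)) = G n + α := by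
    rw [hG n, sub_add_cancel, mprod_peel_left F n (M + 1)]
    congr 1
    exact Finset.prod_congr rfl fun s _ => by congr 1; ring
  have hrelm : (∏ s ∈ Finset.range (M + 1), F (n - M - 1 + s)) * F n
      = G (n - M - 1) + α := by
    rw [hG (n - M - 1), sub_add_cancel, mprod_peel_right F (n - M - 1) (M + 1),
      show n - (M:ℤ) - 1 + ((M + 1 : ℕ) : ℤ) = n by push_cast; ring]
  rw [sumsplit M (SvD M g G) n]
  rw [show (((g n + α) * (∑ s ∈ Finset.range M, SvD M g G (n + s + 1)) * F n
        + g n * (F n * SvD M g G n)) * G n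
      - g n * F n * ((G n + α) *
          (SvD M g G n + (∑ s ∈ Finset.range M, SvD M g G (n + s + 1)) + SvD M g G (n + M + 1))))
      = F n * ((G n - g n) * (α * ∑ s ∈ Finset.range M, SvD M g G (n + s + 1))
          - α * (g n * SvD M g G n) - g n * (G n + α) * SvD M g G (n + M + 1)) from by ring]
  rw [telD M α F g G hg hG hG0 n, hPhi1, hPhi0, hSvn, hSvp, hP1, hP2, hP3, hP4]
  set PFp := ∏ s ∈ Finset.range (M + 1), F (n + s + 1) with hPFpd
  set PFm := ∏ s ∈ Finset.range (M + 1), F (n - M - 1 + s) with hPFmd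
  set a := ∏ s ∈ Finset.range M, g (n - M + s) with had
  set b := ∏ s ∈ Finset.range M, g (n + 1 + s) with hbd
  set c := ∏ s ∈ Finset.range M, G (n - M + s) with hcd
  set d := ∏ s ∈ Finset.range M, G (n + 1 + s) with hdd
  have hcz : c ≠ 0 := by
    rw [hcd]; exact Finset.prod_ne_zero_iff.mpr fun _ _ => hG0 _
  have hdz : d ≠ 0 := by
    rw [hdd]; exact Finset.prod_ne_zero_iff.mpr fun _ _ => hG0 _
  exact scalar_key a b c d (g (n - (M:ℤ) - 1)) (g n) (g (n + (M:ℤ) + 1))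
    (G (n - (M:ℤ) - 1)) (G n) (G (n + (M:ℤ) + 1)) (F n) PFp PFm α
    hcz hdz (hG0 _) (hG0 _) (hG0 _) hrelp hrelm



/-- The Miura-type substitution `u = g f / G` maps solutions of the modified lattice
into solutions of the integrable discretization of the Sawada–Kotera equation. -/
theorem miura_modified_to_dSK_first
    (m : ℕ) (hm : 1 ≤ m) (α : ℂ)
    (f : ℝ → ℤ → ℂ)
    (g G : ℝ → ℤ → ℂ)
    (hg : ∀ (t : ℝ) (n : ℤ),
      g t n = (∏ s ∈ Finset.range (m - 1), f t (n + s + 1)) - α)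
    (hG : ∀ (t : ℝ) (n : ℤ),
      G t n = (∏ s ∈ Finset.range (m + 1), f t (n + s)) - α)
    (hG0 : ∀ (t : ℝ) (n : ℤ), G t n ≠ 0)
    (hf : ∀ (t : ℝ) (n : ℤ),
      HasDerivAt (fun τ => f τ n)
        (f t n * (∏ s ∈ Finset.range (m - 1), g t (n - s - 1))
            / (∏ s ∈ Finset.range (m + 1), G t (n - s))
          * (g t n * g t (n - m) * (G t n - G t (n - m))
            - G t n * G t (n - m) * (g t n - g t (n - m)))) t)
    (u : ℝ → ℤ → ℂ)
    (hu : ∀ (t : ℝ) (n : ℤ), u t n = g t n * f t n / G t n) :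
    ∀ (t : ℝ) (n : ℤ),
      HasDerivAt (fun τ => u τ n)
        (u t n ^ 2 *
            ((∏ s ∈ Finset.range m, u t (n + s + 1)) -
              ∏ s ∈ Finset.range m, u t (n - s - 1))
          - u t n *
            ((∏ s ∈ Finset.range (m - 1), u t (n + s + 1)) -
              ∏ s ∈ Finset.range (m - 1), u t (n - s - 1))) t := by
  obtain ⟨M, rfl⟩ : ∃ M, m = M + 1 := ⟨m - 1, by omega⟩
  have hmm : M + 1 - 1 = M := by omega
  simp only [hmm] at hg hf ⊢
  have hcast : ((M + 1 : ℕ) : ℤ) = (M : ℤ) + 1 := by push_cast; ring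
  simp only [hcast, sub_add_eq_sub_sub] at hf
  intro t n
  have hgs : ∀ k : ℤ, g t k = (∏ s ∈ Finset.range M, f t (k + s + 1)) - α := fun k => hg t k
  have hGs : ∀ k : ℤ, G t k = (∏ s ∈ Finset.range (M + 1 + 1), f t (k + s)) - α :=
    fun k => hG t k
  have hG0s : ∀ k : ℤ, G t k ≠ 0 := fun k => hG0 t k
  have hfd : ∀ k : ℤ, HasDerivAt (fun τ => f τ k) (f t k * SvD M (g t) (G t) k) t := by
    intro k
    have h := hf t k
    have he : f t k * (∏ s ∈ Finset.range M, g t (k - s - 1))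
          / (∏ s ∈ Finset.range (M + 1 + 1), G t (k - s))
          * (g t k * g t (k - M - 1) * (G t k - G t (k - M - 1))
            - G t k * G t (k - M - 1) * (g t k - g t (k - M - 1)))
        = f t k * SvD M (g t) (G t) k := by
      unfold SvD; ring
    rw [he] at h
    exact h
  have hgd : ∀ k : ℤ, HasDerivAt (fun τ => g τ k)
      ((g t k + α) * ∑ s ∈ Finset.range M, SvD M (g t) (G t) (k + s + 1)) t := by
    intro k
    have h1 : (fun τ => g τ k) = fun τ => (∏ s ∈ Finset.range M, f τ (k + s + 1)) - α :=
      funext fun τ => hg τ k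
    rw [h1]
    have h2 : HasDerivAt (fun τ => ∏ s ∈ Finset.range M, f τ (k + s + 1))
        (∑ s ∈ Finset.range M,
          (∏ j ∈ (Finset.range M).erase s, f t (k + j + 1)) *
            (f t (k + s + 1) * SvD M (g t) (G t) (k + s + 1))) t := by
      have h := HasDerivAt.finset_prod (𝕜 := ℝ) (x := t) (u := Finset.range M)
        (f := fun s τ => f τ (k + s + 1))
        (f' := fun s => f t (k + s + 1) * SvD M (g t) (G t) (k + s + 1))
        (fun i _ => hfd (k + i + 1))
      simpa [smul_eq_mul, Finset.prod_fn] using h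
    have h3 : (∑ s ∈ Finset.range M,
          (∏ j ∈ (Finset.range M).erase s, f t (k + j + 1)) *
            (f t (k + s + 1) * SvD M (g t) (G t) (k + s + 1)))
        = (g t k + α) * ∑ s ∈ Finset.range M, SvD M (g t) (G t) (k + s + 1) := by
      rw [Finset.mul_sum]
      refine Finset.sum_congr rfl fun s hs => ?_
      have hpe : (∏ j ∈ (Finset.range M).erase s, f t (k + j + 1)) * f t (k + s + 1)
          = ∏ j ∈ Finset.range M, f t (k + j + 1) := Finset.prod_erase_mul _ _ hs
      have hgk : (∏ j ∈ Finset.range M, f t (k + j + 1)) = g t k + α := by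
        rw [hg t k]; ring
      calc (∏ j ∈ (Finset.range M).erase s, f t (k + j + 1)) *
            (f t (k + s + 1) * SvD M (g t) (G t) (k + s + 1))
          = ((∏ j ∈ (Finset.range M).erase s, f t (k + j + 1)) * f t (k + s + 1)) *
              SvD M (g t) (G t) (k + s + 1) := by ring
        _ = (g t k + α) * SvD M (g t) (G t) (k + s + 1) := by rw [hpe, hgk]
    rw [h3] at h2
    exact h2.sub_const α
  have hGd : ∀ k : ℤ, HasDerivAt (fun τ => G τ k)
      ((G t k + α) * ∑ s ∈ Finset.range (M + 1 + 1), SvD M (g t) (G t) (k + s)) t := by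
    intro k
    have h1 : (fun τ => G τ k) = fun τ => (∏ s ∈ Finset.range (M + 1 + 1), f τ (k + s)) - α :=
      funext fun τ => hG τ k
    rw [h1]
    have h2 : HasDerivAt (fun τ => ∏ s ∈ Finset.range (M + 1 + 1), f τ (k + s))
        (∑ s ∈ Finset.range (M + 1 + 1),
          (∏ j ∈ (Finset.range (M + 1 + 1)).erase s, f t (k + j)) *
            (f t (k + s) * SvD M (g t) (G t) (k + s))) t := by
      have h := HasDerivAt.finset_prod (𝕜 := ℝ) (x := t) (u := Finset.range (M + 1 + 1))
        (f := fun s τ => f τ (k + s))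
        (f' := fun s => f t (k + s) * SvD M (g t) (G t) (k + s))
        (fun i _ => hfd (k + i))
      simpa [smul_eq_mul, Finset.prod_fn] using h
    have h3 : (∑ s ∈ Finset.range (M + 1 + 1),
          (∏ j ∈ (Finset.range (M + 1 + 1)).erase s, f t (k + j)) *
            (f t (k + s) * SvD M (g t) (G t) (k + s)))
        = (G t k + α) * ∑ s ∈ Finset.range (M + 1 + 1), SvD M (g t) (G t) (k + s) := by
      rw [Finset.mul_sum]
      refine Finset.sum_congr rfl fun s hs => ?_
      have hpe : (∏ j ∈ (Finset.range (M + 1 + 1)).erase s, f t (k + j)) * f t (k + s)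
          = ∏ j ∈ Finset.range (M + 1 + 1), f t (k + j) := Finset.prod_erase_mul _ _ hs
      have hGk : (∏ j ∈ Finset.range (M + 1 + 1), f t (k + j)) = G t k + α := by
        rw [hG t k]; ring
      calc (∏ j ∈ (Finset.range (M + 1 + 1)).erase s, f t (k + j)) *
            (f t (k + s) * SvD M (g t) (G t) (k + s))
          = ((∏ j ∈ (Finset.range (M + 1 + 1)).erase s, f t (k + j)) * f t (k + s)) *
              SvD M (g t) (G t) (k + s) := by ring
        _ = (G t k + α) * SvD M (g t) (G t) (k + s) := by rw [hpe, hGk]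
    rw [h3] at h2
    exact h2.sub_const α
  have hud : HasDerivAt (fun τ => u τ n)
      ((((g t n + α) * (∑ s ∈ Finset.range M, SvD M (g t) (G t) (n + s + 1)) * f t n +
          g t n * (f t n * SvD M (g t) (G t) n)) * G t n -
        g t n * f t n *
          ((G t n + α) * ∑ s ∈ Finset.range (M + 1 + 1), SvD M (g t) (G t) (n + s))) /
        G t n ^ 2) t := by
    have h1 : (fun τ => u τ n) = fun τ => g τ n * f τ n / G τ n := funext fun τ => hu τ n
    rw [h1]
    exact ((hgd n).mul (hfd n)).div (hGd n) (hG0 t n)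
  have hkey := final_algebra M α (f t) (g t) (G t) hgs hGs hG0s n
  rw [show (∏ s ∈ Finset.range (M + 1), u t (n + s + 1))
      = ∏ s ∈ Finset.range (M + 1), (g t (n + s + 1) * f t (n + s + 1) / G t (n + s + 1)) from
    Finset.prod_congr rfl fun s _ => hu t _]
  rw [show (∏ s ∈ Finset.range (M + 1), u t (n - s - 1))
      = ∏ s ∈ Finset.range (M + 1), (g t (n - s - 1) * f t (n - s - 1) / G t (n - s - 1)) from
    Finset.prod_congr rfl fun s _ => hu t _]
  rw [show (∏ s ∈ Finset.range M, u t (n + s + 1))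
      = ∏ s ∈ Finset.range M, (g t (n + s + 1) * f t (n + s + 1) / G t (n + s + 1)) from
    Finset.prod_congr rfl fun s _ => hu t _]
  rw [show (∏ s ∈ Finset.range M, u t (n - s - 1))
      = ∏ s ∈ Finset.range M, (g t (n - s - 1) * f t (n - s - 1) / G t (n - s - 1)) from
    Finset.prod_congr rfl fun s _ => hu t _]
  rw [hu t n]
  rw [← hkey]
  exact hud
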